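/- Let F be a totally real number field of degree N and let σ range over the N real embeddings F → ℝ; write Nm = N_{F/ℚ} for the field norm. Let x, x' ∈ F satisfy σ(x)·σ(x') > 0 for every σ. Then 2^{−N} · e^{2π·tr_{F/ℚ}(x x')} · ∏_σ ( 2 ∫_0^∞ e^{−π( σ(x)²/t² + σ(x')² t² )} · ( σ(x)/t + σ(x')·t ) dt/t ) = sgn( Nm(x) ). -/

import Mathlib

open MeasureTheory

section Helpers

open Real Filter Set Topology

noncomputable def PhiG (u : ℝ) : ℝ := ∫ s in (0:ℝ)..u, Real.exp (-Real.pi * s ^ 2)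

lemma gaussianIntegrable : Integrable (fun s : ℝ => Real.exp (-Real.pi * s ^ 2)) :=
  integrable_exp_neg_mul_sq Real.pi_pos

lemma PhiG_hasDerivAt (u : ℝ) : HasDerivAt PhiG (Real.exp (-Real.pi * u ^ 2)) u := by
  have hc : Continuous (fun s : ℝ => Real.exp (-Real.pi * s ^ 2)) := by continuity
  exact intervalIntegral.integral_hasDerivAt_right
    (gaussianIntegrable.intervalIntegrable)
    (hc.stronglyMeasurableAtFilter _ _) hc.continuousAt

lemma PhiG_top : Tendsto PhiG atTop (𝓝 (1/2)) := by
  have h := intervalIntegral_tendsto_integral_Ioi (f := fun s : ℝ => Real.exp (-Real.pi * s ^ 2))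
    (μ := volume) 0 gaussianIntegrable.integrableOn tendsto_id
  have h2 : (∫ s in Ioi (0:ℝ), Real.exp (-Real.pi * s ^ 2)) = 1/2 := by
    rw [integral_gaussian_Ioi]
    simp [div_self Real.pi_ne_zero]
  rwa [h2] at h

lemma PhiG_bot : Tendsto PhiG atBot (𝓝 (-(1/2))) := by
  have h := intervalIntegral_tendsto_integral_Iic (f := fun s : ℝ => Real.exp (-Real.pi * s ^ 2))
    (μ := volume) 0 gaussianIntegrable.integrableOn tendsto_id
  have h2 : (∫ s in Iic (0:ℝ), Real.exp (-Real.pi * s ^ 2)) = 1/2 := by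
    have hneg := integral_comp_neg_Ioi (0:ℝ) (fun s => Real.exp (-Real.pi * s ^ 2))
    simp only [neg_zero, neg_sq] at hneg
    rw [← hneg, integral_gaussian_Ioi]
    simp [div_self Real.pi_ne_zero]
  rw [h2] at h
  have : Tendsto (fun u : ℝ => -∫ s in u..(0:ℝ), Real.exp (-Real.pi * s ^ 2)) atBot
      (𝓝 (-(1/2))) := h.neg
  refine this.congr fun u => ?_
  rw [PhiG, ← intervalIntegral.integral_symm]

lemma gauss_integral_pos {a b : ℝ} (ha : 0 < a) (hb : 0 < b) :
    ∫ t in Set.Ioi (0:ℝ),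
        Real.exp (-Real.pi * (a ^ 2 / t ^ 2 + b ^ 2 * t ^ 2)) * (a / t + b * t) / t
      = Real.exp (-(2 * Real.pi * (a * b))) := by
  set c : ℝ := Real.exp (-(2 * Real.pi * (a * b))) with hc
  set g : ℝ → ℝ := fun t => b * t - a / t with hgdef
  set f : ℝ → ℝ := fun t => if 0 < t then c * PhiG (g t) else -(c / 2) with hfdef
  set F : ℝ → ℝ := fun t =>
    Real.exp (-Real.pi * (a ^ 2 / t ^ 2 + b ^ 2 * t ^ 2)) * (a / t + b * t) / t with hFdef
  have hg_deriv : ∀ t : ℝ, 0 < t → HasDerivAt g (b + a / t ^ 2) t := by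
    intro t ht
    have h1 : HasDerivAt (fun t : ℝ => b * t) b t := by
      simpa using (hasDerivAt_id t).const_mul b
    have h2 : HasDerivAt (fun t : ℝ => a / t) (-(a / t ^ 2)) t := by
      have := (hasDerivAt_inv ht.ne').const_mul a
      simpa [div_eq_mul_inv, neg_div] using this
    exact (h1.sub h2).congr_deriv (by ring)
  have key : ∀ t : ℝ, 0 < t →
      c * Real.exp (-Real.pi * (g t) ^ 2) * (b + a / t ^ 2) = F t := by
    intro t ht
    have ht' : t ≠ 0 := ht.ne'
    rw [show F t = Real.exp (-Real.pi * (a ^ 2 / t ^ 2 + b ^ 2 * t ^ 2))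
        * (a / t + b * t) / t from rfl]
    have hsq : -Real.pi * (a ^ 2 / t ^ 2 + b ^ 2 * t ^ 2)
        = -(2 * Real.pi * (a * b)) + -Real.pi * (g t) ^ 2 := by
      simp only [hgdef]
      field_simp
      ring
    rw [hsq, Real.exp_add, hc]
    field_simp
    ring
  have hf_deriv : ∀ t ∈ Ioi (0:ℝ), HasDerivAt f (F t) t := by
    intro t ht
    have ht : (0:ℝ) < t := ht
    have hPg : HasDerivAt (fun t => c * PhiG (g t))
        (c * (Real.exp (-Real.pi * (g t) ^ 2) * (b + a / t ^ 2))) t :=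
      (((PhiG_hasDerivAt (g t)).comp t (hg_deriv t ht))).const_mul c
    have heq : f =ᶠ[𝓝 t] fun t => c * PhiG (g t) := by
      filter_upwards [Ioi_mem_nhds ht] with s hs
      have hs' : (0:ℝ) < s := hs
      simp only [hfdef, if_pos hs']
    have h2 : HasDerivAt f (c * (Real.exp (-Real.pi * (g t) ^ 2) * (b + a / t ^ 2))) t :=
      hPg.congr_of_eventuallyEq heq
    rw [← key t ht]
    convert h2 using 1
    ring
  have hF_nonneg : ∀ t ∈ Ioi (0:ℝ), 0 ≤ F t := by
    intro t ht
    have ht : (0:ℝ) < t := ht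
    apply div_nonneg _ ht.le
    apply mul_nonneg (Real.exp_pos _).le
    positivity
  have hg_top : Tendsto g atTop atTop := by
    have h1 : Tendsto (fun t : ℝ => b * t) atTop atTop :=
      (tendsto_id.const_mul_atTop hb)
    have h2 : Tendsto (fun t : ℝ => -(a / t)) atTop (𝓝 0) := by
      simpa [div_eq_mul_inv] using ((tendsto_inv_atTop_zero.const_mul a).neg)
    exact (h1.atTop_add h2).congr (fun t => by simp only [hgdef]; ring)
  have hg_bot : Tendsto g (𝓝[>] (0:ℝ)) atBot := by
    have h1 : Tendsto (fun t : ℝ => b * t) (𝓝[>] (0:ℝ)) (𝓝 0) := by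
      have : Tendsto (fun t : ℝ => b * t) (𝓝 (0:ℝ)) (𝓝 (b * 0)) :=
        (continuous_const.mul continuous_id).tendsto 0
      simpa using this.mono_left nhdsWithin_le_nhds
    have h2 : Tendsto (fun t : ℝ => -(a / t)) (𝓝[>] (0:ℝ)) atBot := by
      have := (tendsto_inv_nhdsGT_zero.const_mul_atTop ha)
      have h3 := tendsto_neg_atTop_atBot.comp this
      simpa [div_eq_mul_inv, Function.comp_def] using h3
    exact (h1.add_atBot h2).congr (fun t => by simp only [hgdef]; ring)
  have hf_top : Tendsto f atTop (𝓝 (c / 2)) := by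
    have h1 : Tendsto (fun t => c * PhiG (g t)) atTop (𝓝 (c * (1/2))) :=
      (PhiG_top.comp hg_top).const_mul c
    have heq : (fun t => c * PhiG (g t)) =ᶠ[atTop] f := by
      filter_upwards [eventually_gt_atTop (0:ℝ)] with s hs
      simp only [hfdef, if_pos hs]
    have := h1.congr' heq
    simpa [div_eq_mul_inv] using this
  have hval : f 0 = -(c/2) := by simp [hfdef]
  have hcont : ContinuousWithinAt f (Ici (0:ℝ)) 0 := by
    rw [ContinuousWithinAt, hval, show Ici (0:ℝ) = {0} ∪ Ioi 0 by
      rw [← Ioi_union_left]; exact union_comm _ _, nhdsWithin_union]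
    rw [tendsto_sup]
    constructor
    · rw [nhdsWithin_singleton]
      simpa [hval] using tendsto_pure_nhds f 0
    · have h1 : Tendsto (fun t => c * PhiG (g t)) (𝓝[>] (0:ℝ)) (𝓝 (c * (-(1/2)))) :=
        (PhiG_bot.comp hg_bot).const_mul c
      have heq : (fun t => c * PhiG (g t)) =ᶠ[𝓝[>] (0:ℝ)] f := by
        filter_upwards [self_mem_nhdsWithin] with s hs
        have hs' : (0:ℝ) < s := hs
        simp only [hfdef, if_pos hs']
      have := h1.congr' heq
      convert this using 2
      ring
  have hmain := integral_Ioi_of_hasDerivAt_of_nonneg hcont hf_deriv hF_nonneg hf_top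
  rw [hval] at hmain
  rw [show (∫ t in Set.Ioi (0:ℝ),
      Real.exp (-Real.pi * (a ^ 2 / t ^ 2 + b ^ 2 * t ^ 2)) * (a / t + b * t) / t)
      = ∫ t in Set.Ioi (0:ℝ), F t from rfl, hmain]
  ring

lemma sign_eq_div_abs' {y : ℝ} (h : y ≠ 0) : Real.sign y = y / |y| := by
  rcases h.lt_or_gt with hy | hy
  · rw [Real.sign_of_neg hy, abs_of_neg hy, div_neg, div_self h]
  · rw [Real.sign_of_pos hy, abs_of_pos hy, div_self h]

lemma sign_prod' {ι : Type*} (s : Finset ι) (f : ι → ℝ) (h : ∀ i ∈ s, f i ≠ 0) :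
    ∏ i ∈ s, Real.sign (f i) = Real.sign (∏ i ∈ s, f i) := by
  have hne : (∏ i ∈ s, f i) ≠ 0 := Finset.prod_ne_zero_iff.2 h
  rw [sign_eq_div_abs' hne, Finset.prod_congr rfl (fun i hi => sign_eq_div_abs' (h i hi)),
    Finset.prod_div_distrib, Finset.abs_prod]

lemma gauss_integral_signed {a b : ℝ} (h : 0 < a * b) :
    ∫ t in Set.Ioi (0:ℝ),
        Real.exp (-Real.pi * (a ^ 2 / t ^ 2 + b ^ 2 * t ^ 2)) * (a / t + b * t) / t
      = Real.sign a * Real.exp (-(2 * Real.pi * (a * b))) := by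
  rcases lt_or_gt_of_ne (fun h0 : a = 0 => by simp [h0] at h) with ha | ha
  · have hb : b < 0 := by
      by_contra hb
      push_neg at hb
      nlinarith
    have key := gauss_integral_pos (a := -a) (b := -b) (by linarith) (by linarith)
    have heq : ∀ t : ℝ,
        Real.exp (-Real.pi * ((-a) ^ 2 / t ^ 2 + (-b) ^ 2 * t ^ 2)) * ((-a) / t + (-b) * t) / t
        = -(Real.exp (-Real.pi * (a ^ 2 / t ^ 2 + b ^ 2 * t ^ 2)) * (a / t + b * t) / t) := by
      intro t; ring_nf
    rw [show -a * -b = a * b by ring] at key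
    rw [Real.sign_of_neg ha]
    have : ∫ t in Set.Ioi (0:ℝ),
        Real.exp (-Real.pi * ((-a) ^ 2 / t ^ 2 + (-b) ^ 2 * t ^ 2)) * ((-a) / t + (-b) * t) / t
        = -∫ t in Set.Ioi (0:ℝ),
          Real.exp (-Real.pi * (a ^ 2 / t ^ 2 + b ^ 2 * t ^ 2)) * (a / t + b * t) / t := by
      rw [← integral_neg]
      exact integral_congr_ae (Filter.Eventually.of_forall (fun t => heq t))
    rw [this] at key
    linarith [key]
  · have hb : 0 < b := by nlinarith
    rw [Real.sign_of_pos ha, one_mul]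
    exact gauss_integral_pos ha hb

lemma cast_trace_eq {F : Type*} [Field F] [NumberField F] {N : ℕ}
    (hdeg : Module.finrank ℚ F = N)
    (σ : Fin N → (F →+* ℝ)) (hσ : Function.Bijective σ) (z : F) :
    ((Algebra.trace ℚ F z : ℚ) : ℝ) = ∑ j, σ j z := by
  set e : Fin N → (F →+* ℂ) := fun j => Complex.ofRealHom.comp (σ j) with he
  have he_inj : Function.Injective e := by
    intro i j hij
    apply hσ.1
    ext y
    have := DFunLike.congr_fun hij y
    simpa [he] using this
  have hcard : Fintype.card (F →+* ℂ) = N := by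
    rw [NumberField.Embeddings.card F ℂ, hdeg]
  have he_bij : Function.Bijective e :=
    (Fintype.bijective_iff_injective_and_card e).2 ⟨he_inj, by simp [hcard]⟩
  have h1 : (algebraMap ℚ ℂ) (Algebra.trace ℚ F z) = ∑ φ : F →ₐ[ℚ] ℂ, φ z :=
    trace_eq_sum_embeddings (K := ℚ) (L := F) (E := ℂ)
  have h2 : ∑ φ : F →ₐ[ℚ] ℂ, φ z = ∑ φ : F →+* ℂ, φ z :=
    (Fintype.sum_equiv (RingHom.equivRatAlgHom F ℂ) _ _ (fun _ => rfl)).symm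
  have h3 : ∑ φ : F →+* ℂ, φ z = ∑ j, e j z :=
    (Fintype.sum_bijective e he_bij _ _ (fun _ => rfl)).symm
  have h4 : (((Algebra.trace ℚ F z : ℚ) : ℝ) : ℂ) = ((∑ j, σ j z : ℝ) : ℂ) := by
    rw [show (((Algebra.trace ℚ F z : ℚ) : ℝ) : ℂ) = (algebraMap ℚ ℂ) (Algebra.trace ℚ F z) by
      push_cast; rfl, h1, h2, h3]
    push_cast
    rfl
  exact_mod_cast h4

lemma cast_norm_eq {F : Type*} [Field F] [NumberField F] {N : ℕ}
    (hdeg : Module.finrank ℚ F = N)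
    (σ : Fin N → (F →+* ℝ)) (hσ : Function.Bijective σ) (z : F) :
    ((Algebra.norm ℚ z : ℚ) : ℝ) = ∏ j, σ j z := by
  set e : Fin N → (F →+* ℂ) := fun j => Complex.ofRealHom.comp (σ j) with he
  have he_inj : Function.Injective e := by
    intro i j hij
    apply hσ.1
    ext y
    have := DFunLike.congr_fun hij y
    simpa [he] using this
  have hcard : Fintype.card (F →+* ℂ) = N := by
    rw [NumberField.Embeddings.card F ℂ, hdeg]
  have he_bij : Function.Bijective e :=
    (Fintype.bijective_iff_injective_and_card e).2 ⟨he_inj, by simp [hcard]⟩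
  have h1 : (algebraMap ℚ ℂ) (Algebra.norm ℚ z) = ∏ φ : F →ₐ[ℚ] ℂ, φ z :=
    Algebra.norm_eq_prod_embeddings (K := ℚ) (L := F) (E := ℂ) z
  have h2 : ∏ φ : F →ₐ[ℚ] ℂ, φ z = ∏ φ : F →+* ℂ, φ z :=
    (Fintype.prod_equiv (RingHom.equivRatAlgHom F ℂ) _ _ (fun _ => rfl)).symm
  have h3 : ∏ φ : F →+* ℂ, φ z = ∏ j, e j z :=
    (Fintype.prod_bijective e he_bij _ _ (fun _ => rfl)).symm
  have h4 : (((Algebra.norm ℚ z : ℚ) : ℝ) : ℂ) = ((∏ j, σ j z : ℝ) : ℂ) := by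
    rw [show (((Algebra.norm ℚ z : ℚ) : ℝ) : ℂ) = (algebraMap ℚ ℂ) (Algebra.norm ℚ z) by
      push_cast; rfl, h1, h2, h3]
    push_cast
    rfl
  exact_mod_cast h4

end Helpers

/-- The analytic identity `∫_{𝔻₀⁺} φ⁰(𝐱) = sgn Nm(x)` from the proof of
Proposition 4.12 (intertop). -/
theorem integral_phi0_eq_sign_norm
    (F : Type*) [Field F] [NumberField F] (N : ℕ)
    (hdeg : Module.finrank ℚ F = N)
    (σ : Fin N → (F →+* ℝ)) (hσ : Function.Bijective σ)
    (x x' : F) (hpos : ∀ j, 0 < σ j x * σ j x') :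
    ((2 : ℝ) ^ N)⁻¹ * Real.exp (2 * Real.pi * (Algebra.trace ℚ F (x * x') : ℝ))
      * ∏ j, (2 * ∫ t in Set.Ioi (0 : ℝ),
          Real.exp (-Real.pi * ((σ j x) ^ 2 / t ^ 2 + (σ j x') ^ 2 * t ^ 2))
            * ((σ j x) / t + (σ j x') * t) / t)
      = Real.sign ((Algebra.norm ℚ x : ℝ)) := by
  have hxne : ∀ j, σ j x ≠ 0 := by
    intro j h
    have := hpos j
    rw [h, zero_mul] at this
    exact lt_irrefl _ this
  have hprod : ∀ j ∈ Finset.univ, (2 * ∫ t in Set.Ioi (0 : ℝ),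
      Real.exp (-Real.pi * ((σ j x) ^ 2 / t ^ 2 + (σ j x') ^ 2 * t ^ 2))
        * ((σ j x) / t + (σ j x') * t) / t)
      = 2 * (Real.sign (σ j x) * Real.exp (-(2 * Real.pi * (σ j x * σ j x')))) := by
    intro j _
    rw [gauss_integral_signed (hpos j)]
  rw [Finset.prod_congr rfl hprod, Finset.prod_mul_distrib, Finset.prod_const,
    Finset.card_univ, Fintype.card_fin, Finset.prod_mul_distrib, ← Real.exp_sum]
  have hT : ((Algebra.trace ℚ F (x * x') : ℚ) : ℝ) = ∑ j, σ j x * σ j x' := by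
    rw [cast_trace_eq hdeg σ hσ]
    exact Finset.sum_congr rfl (fun j _ => map_mul _ _ _)
  have hsum : ∑ j, -(2 * Real.pi * (σ j x * σ j x'))
      = -(2 * Real.pi * ((Algebra.trace ℚ F (x * x') : ℚ) : ℝ)) := by
    rw [hT, Finset.mul_sum, ← Finset.sum_neg_distrib]
  rw [hsum]
  have hS : ∏ j, Real.sign (σ j x) = Real.sign ((Algebra.norm ℚ x : ℚ) : ℝ) := by
    rw [sign_prod' _ _ (fun j _ => hxne j), cast_norm_eq hdeg σ hσ]
  rw [hS, Real.exp_neg]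
  field_simp
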